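/- Define a real sequence (a_n)_{n≥0} by a_0 = 2 and a_{n+1} = −2 + √(9 + 6(a_n − 1)) for n ≥ 0 (equivalently, a_{n+1} is the positive root of a_{n+1} + (1/6)(a_{n+1} − 1)² = a_n). Then a_n ≤ 1 + 7/(n+7) for all n ≥ 0. -/
import Mathlib


/-- The sequence `a_0 = 2`, `a_{n+1} = −2 + √(9 + 6(a_n − 1))` (so that `a_{n+1}` is the
positive root of `a_{n+1} + (1/6)(a_{n+1} − 1)² = a_n`) satisfies `a_n ≤ 1 + 7/(n+7)`
for all `n ≥ 0`. -/
theorem recursive_sequence_bound (a : ℕ → ℝ) (h0 : a 0 = 2)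
    (hrec : ∀ n, a (n + 1) = -2 + Real.sqrt (9 + 6 * (a n - 1))) :
    ∀ n, a n ≤ 1 + 7 / (n + 7) := by
  intro n
  induction n with
  | zero => norm_num [h0]
  | succ n ih =>
    rw [hrec]
    have hn7 : (0:ℝ) < (n:ℝ) + 7 := by positivity
    have hn8 : (0:ℝ) < (n:ℝ) + 8 := by positivity
    have h1 : Real.sqrt (9 + 6 * (a n - 1)) ≤ Real.sqrt (9 + 42 / ((n:ℝ) + 7)) := by
      apply Real.sqrt_le_sqrt
      have h6 : 6 * (7 / ((n:ℝ) + 7)) = 42 / ((n:ℝ) + 7) := by ring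
      linarith
    have h2 : Real.sqrt (9 + 42 / ((n:ℝ) + 7)) ≤ 3 + 7 / ((n:ℝ) + 8) := by
      rw [show (3:ℝ) + 7 / ((n:ℝ) + 8) = Real.sqrt ((3 + 7 / ((n:ℝ) + 8))^2) by
        rw [Real.sqrt_sq (by positivity)]]
      apply Real.sqrt_le_sqrt
      have key : 9 + 42/((n:ℝ)+7) + (7*(n:ℝ)+7)/(((n:ℝ)+8)^2*((n:ℝ)+7)) = (3+7/((n:ℝ)+8))^2 := by
        field_simp
        ring
      have hpos : (0:ℝ) ≤ (7*(n:ℝ)+7)/(((n:ℝ)+8)^2*((n:ℝ)+7)) := by positivity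
      linarith
    push_cast
    have h3 := h1.trans h2
    have : ((n:ℝ) + 1 + 7) = (n:ℝ) + 8 := by ring
    rw [this]
    linarith
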